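/- (Orientation invariance of the direction-integrated SECT, as used in DETECT.) Let K be a finite geometric simplicial complex in ℝ^d with all vertices in the closed ball B(0,R), R > 0, let ρ : ℝ^d → ℝ^d be a linear isometry, and let ρK denote the image complex. Then for every t ∈ [-R, R], the integral of the smooth Euler characteristic curve over all directions with respect to the (isometry-invariant) spherical measure is unchanged: ∫_{S^{d-1}} SECC_ω^{ρK}(t) dω = ∫_{S^{d-1}} SECC_ω^{K}(t) dω. -/

import Mathlib

open scoped Classical BigOperators

/-- The simplex-wise function `f_ω(σ) = max_{v ∈ σ} ⟨v, ω⟩`. -/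
noncomputable def fdir {d : ℕ} (ω : EuclideanSpace ℝ (Fin d))
    (σ : Finset (EuclideanSpace ℝ (Fin d))) : ℝ :=
  if h : σ.Nonempty then σ.sup' h (fun v => (inner ℝ v ω : ℝ)) else 0

/-- Euler characteristic of a finite collection of simplices (given by vertex sets):
`χ(L) = Σ_p (-1)^p c_p(L)` where a `p`-simplex has `p+1` vertices. -/
noncomputable def eulerChar {d : ℕ} (F : Finset (Finset (EuclideanSpace ℝ (Fin d)))) : ℤ :=
  ∑ p ∈ Finset.range (F.sup Finset.card),
    (-1 : ℤ) ^ p * ((F.filter fun σ => σ.card = p + 1).card : ℤ)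

/-- The sublevel complex `K_a = {σ ∈ K : f_ω(σ) ≤ a}` (on the level of face sets). -/
noncomputable def sublevel {d : ℕ} (F : Finset (Finset (EuclideanSpace ℝ (Fin d))))
    (ω : EuclideanSpace ℝ (Fin d)) (a : ℝ) : Finset (Finset (EuclideanSpace ℝ (Fin d))) :=
  F.filter fun σ => fdir ω σ ≤ a

/-- The Euler characteristic curve `ECC_ω(a) = χ(K_a)`. -/
noncomputable def ECC {d : ℕ} (F : Finset (Finset (EuclideanSpace ℝ (Fin d))))
    (ω : EuclideanSpace ℝ (Fin d)) (a : ℝ) : ℤ :=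
  eulerChar (sublevel F ω a)

/-- The average value `avg_ω = (1/(2R)) ∫_{-R}^R ECC_ω(a) da`. -/
noncomputable def eccAvg {d : ℕ} (F : Finset (Finset (EuclideanSpace ℝ (Fin d))))
    (ω : EuclideanSpace ℝ (Fin d)) (R : ℝ) : ℝ :=
  (1 / (2 * R)) * ∫ a in (-R)..R, (ECC F ω a : ℝ)

/-- The smooth Euler characteristic curve `SECC_ω(t) = ∫_{-R}^t (ECC_ω(a) - avg_ω) da`. -/
noncomputable def SECC {d : ℕ} (F : Finset (Finset (EuclideanSpace ℝ (Fin d))))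
    (ω : EuclideanSpace ℝ (Fin d)) (R t : ℝ) : ℝ :=
  ∫ a in (-R)..t, ((ECC F ω a : ℝ) - eccAvg F ω R)


open MeasureTheory

lemma fdir_image {d : ℕ} (ρ : EuclideanSpace ℝ (Fin d) ≃ₗᵢ[ℝ] EuclideanSpace ℝ (Fin d))
    (ω : EuclideanSpace ℝ (Fin d)) (σ : Finset (EuclideanSpace ℝ (Fin d))) :
    fdir ω (σ.image ρ) = fdir (ρ.symm ω) σ := by
  unfold fdir
  rcases σ.eq_empty_or_nonempty with rfl | h
  · simp
  · rw [dif_pos (h.image ρ), dif_pos h, Finset.sup'_image]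
    apply Finset.sup'_congr _ rfl
    intro v _
    simp only [Function.comp_apply]
    conv_lhs => rw [show ω = ρ (ρ.symm ω) from (ρ.apply_symm_apply ω).symm]
    exact ρ.inner_map_map v (ρ.symm ω)

lemma eulerChar_image {d : ℕ} (ρ : EuclideanSpace ℝ (Fin d) ≃ₗᵢ[ℝ] EuclideanSpace ℝ (Fin d))
    (G : Finset (Finset (EuclideanSpace ℝ (Fin d)))) :
    eulerChar (G.image fun σ => σ.image ρ) = eulerChar G := by
  unfold eulerChar
  have hinj : Function.Injective (fun σ : Finset (EuclideanSpace ℝ (Fin d)) => σ.image ρ) :=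
    fun a b hab => by
      have := congrArg (Finset.image ρ.symm) hab
      simpa [Finset.image_image, Function.comp] using this
  have hcard : ∀ σ : Finset (EuclideanSpace ℝ (Fin d)), (σ.image ρ).card = σ.card :=
    fun σ => Finset.card_image_of_injective σ ρ.injective
  have hsup : (G.image fun σ => σ.image ρ).sup Finset.card = G.sup Finset.card := by
    rw [Finset.sup_image]
    exact Finset.sup_congr rfl fun σ _ => hcard σ
  rw [hsup]
  refine Finset.sum_congr rfl fun p _ => ?_
  congr 2
  rw [Finset.filter_image]
  rw [Finset.card_image_of_injective _ hinj]
  congr 1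
  exact Finset.filter_congr fun σ _ => by rw [hcard σ]

lemma ECC_image {d : ℕ} (ρ : EuclideanSpace ℝ (Fin d) ≃ₗᵢ[ℝ] EuclideanSpace ℝ (Fin d))
    (F : Finset (Finset (EuclideanSpace ℝ (Fin d)))) (ω : EuclideanSpace ℝ (Fin d)) (a : ℝ) :
    ECC (F.image fun σ => σ.image ρ) ω a = ECC F (ρ.symm ω) a := by
  unfold ECC sublevel
  rw [Finset.filter_image]
  have : (F.filter fun σ => fdir ω (σ.image ρ) ≤ a)
      = F.filter fun σ => fdir (ρ.symm ω) σ ≤ a :=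
    Finset.filter_congr fun σ _ => by rw [fdir_image]
  rw [this, eulerChar_image]

lemma SECC_image {d : ℕ} (ρ : EuclideanSpace ℝ (Fin d) ≃ₗᵢ[ℝ] EuclideanSpace ℝ (Fin d))
    (F : Finset (Finset (EuclideanSpace ℝ (Fin d)))) (ω : EuclideanSpace ℝ (Fin d)) (R t : ℝ) :
    SECC (F.image fun σ => σ.image ρ) ω R t = SECC F (ρ.symm ω) R t := by
  unfold SECC eccAvg
  simp_rw [ECC_image]

/-- Orientation invariance of the direction-integrated SECT (as used in DETECT): for a
linear isometry `ρ` of `ℝ^d`, integrating the smooth Euler characteristic curve over all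
directions of the unit sphere (w.r.t. the isometry-invariant spherical measure, here the
`(d-1)`-dimensional Hausdorff measure on the sphere) is unchanged by rotating the complex. -/
theorem SECT_direction_integral_rotation_invariant {d : ℕ}
    (K : Geometry.SimplicialComplex ℝ (EuclideanSpace ℝ (Fin d)))
    (hK : K.faces.Finite) (R : ℝ) (hR : 0 < R)
    (hball : ∀ σ ∈ K.faces, ∀ v ∈ σ, ‖v‖ ≤ R)
    (ρ : EuclideanSpace ℝ (Fin d) ≃ₗᵢ[ℝ] EuclideanSpace ℝ (Fin d)) :
    ∀ t ∈ Set.Icc (-R) R,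
      (∫ ω in Metric.sphere (0 : EuclideanSpace ℝ (Fin d)) 1,
          SECC (hK.toFinset.image fun σ => σ.image ρ) ω R t ∂(μH[(d : ℝ) - 1]))
        = ∫ ω in Metric.sphere (0 : EuclideanSpace ℝ (Fin d)) 1,
            SECC hK.toFinset ω R t ∂(μH[(d : ℝ) - 1]) := by
  intro t _
  have h1 : (∫ ω in Metric.sphere (0 : EuclideanSpace ℝ (Fin d)) 1,
      SECC (hK.toFinset.image fun σ => σ.image ρ) ω R t ∂(μH[(d : ℝ) - 1]))
      = ∫ ω in Metric.sphere (0 : EuclideanSpace ℝ (Fin d)) 1,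
        SECC hK.toFinset (ρ.symm ω) R t ∂(μH[(d : ℝ) - 1]) := by
    refine setIntegral_congr_fun (Metric.isClosed_sphere.measurableSet) fun ω _ => ?_
    exact SECC_image ρ hK.toFinset ω R t
  rw [h1]
  set e : EuclideanSpace ℝ (Fin d) ≃ᵢ EuclideanSpace ℝ (Fin d) := ρ.symm.toIsometryEquiv
  have hmp : MeasurePreserving e (μH[(d : ℝ) - 1]) (μH[(d : ℝ) - 1]) :=
    e.measurePreserving_hausdorffMeasure _
  have hemb : MeasurableEmbedding e := e.toHomeomorph.measurableEmbedding
  have hpre : e ⁻¹' (Metric.sphere (0 : EuclideanSpace ℝ (Fin d)) 1)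
      = Metric.sphere (0 : EuclideanSpace ℝ (Fin d)) 1 := by
    ext x
    simp [e, mem_sphere_zero_iff_norm]
  have := hmp.setIntegral_preimage_emb hemb (fun ω => SECC hK.toFinset ω R t)
    (Metric.sphere (0 : EuclideanSpace ℝ (Fin d)) 1)
  rw [hpre] at this
  exact this
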